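/- arXiv:cs/0301016 — 3 statements merged into one kernel-verified Lean document; each statement's English description precedes it below -/
import Mathlib

section
/- If A ∈ ℂ^{m×n} has singular values σ_1 ≥ … ≥ σ_p with p = min(m,n), then avol_r(A)² equals the r-th elementary symmetric polynomial in σ_1², …, σ_p², i.e. avol_r(A)² = Σ_{|I|=r} Π_{i∈I} σ_i². -/
open Matrix Finset

section CB

variable {R : Type*} [CommRing R]

/-- The order embedding associated to an element of `powersetCard r univ`. -/
noncomputable def pembb {b r : ℕ} (J : Finset (Fin b))
    (hJ : J ∈ (Finset.univ : Finset (Fin b)).powersetCard r) : Fin r ↪o Fin b :=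
  J.orderEmbOfFin (Finset.mem_powersetCard.mp hJ).2

lemma det_mul_expand {r b : ℕ} (M : Matrix (Fin r) (Fin b) R) (N : Matrix (Fin b) (Fin r) R) :
    det (M * N) = ∑ p : Fin r → Fin b, (∏ j, N (p j) j) * det (M.submatrix id p) := by
  rw [det_apply']
  simp only [mul_apply, Finset.prod_univ_sum, Fintype.piFinset_univ, Finset.mul_sum]
  rw [Finset.sum_comm]
  refine Finset.sum_congr rfl fun p _ => ?_
  rw [← det_mul_row (fun j => N (p j) j) (M.submatrix id p), det_apply']
  refine Finset.sum_congr rfl fun σ _ => ?_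
  congr 1
  refine Finset.prod_congr rfl fun i _ => ?_
  simp [mul_comm]

noncomputable def finsetOf {b r : ℕ} (p : Fin r → Fin b) : Finset (Fin b) :=
  Finset.image p Finset.univ

lemma card_finsetOf {b r : ℕ} {p : Fin r → Fin b} (hp : Function.Injective p) :
    (finsetOf p).card = r := by
  rw [finsetOf, Finset.card_image_of_injective _ hp, Finset.card_univ, Fintype.card_fin]

noncomputable def permOf {b r : ℕ} (p : Fin r → Fin b) (hp : Function.Injective p) :
    Equiv.Perm (Fin r) :=
  Equiv.ofBijective
    (fun j => ((finsetOf p).orderIsoOfFin (card_finsetOf hp)).symm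
      ⟨p j, Finset.mem_image_of_mem p (Finset.mem_univ j)⟩)
    (Finite.injective_iff_bijective.mp (fun a b h => by
      have h2 := congrArg (⇑((finsetOf p).orderIsoOfFin (card_finsetOf hp))) h
      simp only [OrderIso.apply_symm_apply] at h2
      exact hp (congrArg Subtype.val h2)))

lemma orderEmbOfFin_permOf {b r : ℕ} (p : Fin r → Fin b) (hp : Function.Injective p)
    (h : (finsetOf p).card = r) (j : Fin r) :
    (finsetOf p).orderEmbOfFin h (permOf p hp j) = p j := by
  rw [← Finset.coe_orderIsoOfFin_apply]
  show (((finsetOf p).orderIsoOfFin h) (((finsetOf p).orderIsoOfFin (card_finsetOf hp)).symm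
      ⟨p j, Finset.mem_image_of_mem p (Finset.mem_univ j)⟩) : Fin b) = p j
  rw [show card_finsetOf hp = h from rfl]
  rw [OrderIso.apply_symm_apply]

lemma image_pembb {b r : ℕ} (J : Finset (Fin b))
    (hJ : J ∈ (Finset.univ : Finset (Fin b)).powersetCard r) :
    Finset.image (⇑(pembb J hJ)) Finset.univ = J :=
  Finset.coe_injective (by
    rw [Finset.coe_image, Finset.coe_univ, Set.image_univ]
    exact Finset.range_orderEmbOfFin _ _)

/-- **Cauchy–Binet**. -/
lemma cauchyBinet {r b : ℕ} (M : Matrix (Fin r) (Fin b) R) (N : Matrix (Fin b) (Fin r) R) :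
    det (M * N) = ∑ J ∈ ((Finset.univ : Finset (Fin b)).powersetCard r).attach,
      det (M.submatrix id (pembb J.1 J.2)) * det (N.submatrix (pembb J.1 J.2) id) := by
  classical
  rw [det_mul_expand]
  have hzero : ∀ p : Fin r → Fin b, ¬ Function.Injective p →
      (∏ j, N (p j) j) * det (M.submatrix id p) = 0 := by
    intro p hp
    obtain ⟨i, j, hpij, hij⟩ := Function.not_injective_iff.mp hp
    have : det (M.submatrix id p) = 0 :=
      det_zero_of_column_eq hij (fun k => by simp [hpij])
    rw [this, mul_zero]
  rw [← Finset.sum_filter_of_ne (p := fun p : Fin r → Fin b => Function.Injective p)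
    (fun p _ h => by by_contra hinj; exact h (hzero p hinj))]
  have hR : ∀ J ∈ ((Finset.univ : Finset (Fin b)).powersetCard r).attach,
      det (M.submatrix id (pembb J.1 J.2)) * det (N.submatrix (pembb J.1 J.2) id)
      = ∑ τ : Equiv.Perm (Fin r),
          (∏ j, N ((⇑(pembb J.1 J.2) ∘ ⇑τ) j) j) *
            det (M.submatrix id (⇑(pembb J.1 J.2) ∘ ⇑τ)) := by
    rintro ⟨J, hJ⟩ -
    rw [mul_comm, det_apply', Finset.sum_mul]
    refine Finset.sum_congr rfl fun τ _ => ?_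
    have hsub : M.submatrix id (⇑(pembb J hJ) ∘ ⇑τ) =
        (M.submatrix id (pembb J hJ)).submatrix id ⇑τ := by
      rw [submatrix_submatrix]
      simp
    rw [hsub, det_permute']
    simp only [submatrix_apply, id_eq, Function.comp_apply]
    ring
  rw [Finset.sum_congr rfl hR, Finset.sum_sigma']
  refine (Finset.sum_bij
    (fun (x : Σ _ : {s : Finset (Fin b) // s ∈ (Finset.univ : Finset (Fin b)).powersetCard r},
      Equiv.Perm (Fin r)) (_ : x ∈ _) => ⇑(pembb x.1.1 x.1.2) ∘ ⇑x.2) ?_ ?_ ?_ ?_).symm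
  · rintro ⟨⟨J, hJ⟩, τ⟩ -
    simp only [Finset.mem_filter, Finset.mem_univ, true_and]
    exact (pembb J hJ).injective.comp τ.injective
  · intro x1 hx1 x2 hx2 h
    obtain ⟨⟨J1, hJ1⟩, τ1⟩ := x1
    obtain ⟨⟨J2, hJ2⟩, τ2⟩ := x2
    have hJ : J1 = J2 := by
      rw [← image_pembb J1 hJ1, ← image_pembb J2 hJ2]
      ext x
      simp only [Finset.mem_image, Finset.mem_univ, true_and]
      constructor
      · rintro ⟨i, rfl⟩
        exact ⟨τ2 (τ1.symm i), by have h3 := congrFun h (τ1.symm i); simpa using h3.symm⟩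
      · rintro ⟨i, rfl⟩
        exact ⟨τ1 (τ2.symm i), by have h3 := congrFun h (τ2.symm i); simpa using h3⟩
    subst hJ
    have hτ : τ1 = τ2 := by
      ext j
      exact congrArg Fin.val ((pembb J1 hJ1).injective (congrFun h j))
    rw [hτ]
  · intro p hp
    have hinj : Function.Injective p := (Finset.mem_filter.mp hp).2
    have hmem : finsetOf p ∈ (Finset.univ : Finset (Fin b)).powersetCard r :=
      Finset.mem_powersetCard.mpr ⟨Finset.subset_univ _, card_finsetOf hinj⟩
    refine ⟨⟨⟨finsetOf p, hmem⟩, permOf p hinj⟩, Finset.mem_sigma.mpr ⟨Finset.mem_attach _ _,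
      Finset.mem_univ _⟩, ?_⟩
    funext j
    exact orderEmbOfFin_permOf p hinj _ j
  · rintro ⟨⟨J, hJ⟩, τ⟩ -
    rfl

lemma cauchyBinet' {a b c r : ℕ} (X : Matrix (Fin a) (Fin b) R) (Y : Matrix (Fin b) (Fin c) R)
    (I : Finset (Fin a)) (hI : I ∈ (Finset.univ : Finset (Fin a)).powersetCard r)
    (K : Finset (Fin c)) (hK : K ∈ (Finset.univ : Finset (Fin c)).powersetCard r) :
    det ((X * Y).submatrix (pembb I hI) (pembb K hK)) =
      ∑ J ∈ ((Finset.univ : Finset (Fin b)).powersetCard r).attach,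
        det (X.submatrix (pembb I hI) (pembb J.1 J.2)) *
          det (Y.submatrix (pembb J.1 J.2) (pembb K hK)) := by
  have h : (X * Y).submatrix (pembb I hI) (pembb K hK) =
      (X.submatrix (pembb I hI) id) * (Y.submatrix id (pembb K hK)) := by
    ext i j; simp [mul_apply]
  rw [h, cauchyBinet]
  simp [submatrix_submatrix]

lemma det_one_minor {b r : ℕ} (L K : Finset (Fin b))
    (hL : L ∈ (Finset.univ : Finset (Fin b)).powersetCard r)
    (hK : K ∈ (Finset.univ : Finset (Fin b)).powersetCard r) :
    det ((1 : Matrix (Fin b) (Fin b) R).submatrix (pembb L hL) (pembb K hK)) =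
      if L = K then 1 else 0 := by
  split_ifs with h
  · subst h
    have : (1 : Matrix (Fin b) (Fin b) R).submatrix (pembb L hL) (pembb L hK) = 1 := by
      ext i j
      simp only [submatrix_apply, one_apply]
      by_cases hij : i = j
      · subst hij; rw [if_pos rfl, if_pos rfl]
      · rw [if_neg (fun hc => hij ((pembb L hK).injective hc)), if_neg hij]
    rw [this, det_one]
  · have hcard : L.card ≤ K.card := by
      rw [(Finset.mem_powersetCard.mp hL).2, (Finset.mem_powersetCard.mp hK).2]
    have hex : ∃ x ∈ K, x ∉ L := by
      by_contra hc
      push_neg at hc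
      exact h ((Finset.eq_of_subset_of_card_le hc hcard).symm)
    obtain ⟨x, hxK, hxL⟩ := hex
    have hxr : x ∈ Set.range (pembb K hK) := by
      rw [pembb, Finset.range_orderEmbOfFin]; exact hxK
    obtain ⟨j, hj⟩ := hxr
    apply det_eq_zero_of_column_eq_zero j
    intro i
    simp only [submatrix_apply, one_apply, hj]
    rw [if_neg]
    intro hc
    exact hxL (hc ▸ Finset.orderEmbOfFin_mem L _ i)

lemma det_diagonal_minor {b r : ℕ} (d : Fin b → R) (K : Finset (Fin b))
    (hK : K ∈ (Finset.univ : Finset (Fin b)).powersetCard r) :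
    det ((diagonal d).submatrix (pembb K hK) (pembb K hK)) = ∏ k ∈ K, d k := by
  have h1 : (diagonal d).submatrix (pembb K hK) (pembb K hK) = diagonal (d ∘ (pembb K hK)) := by
    ext i j
    by_cases hij : i = j
    · subst hij; simp
    · rw [submatrix_apply,
        diagonal_apply_ne _ (fun hc => hij ((pembb K hK).injective hc)),
        diagonal_apply_ne _ hij]
  rw [h1, det_diagonal]
  refine Finset.prod_bij (fun i _ => pembb K hK i)
    (fun i _ => Finset.orderEmbOfFin_mem _ _ _)
    (fun a _ c _ h => (pembb K hK).injective h) (fun k hk => ?_) (fun i _ => rfl)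
  have : k ∈ Set.range (pembb K hK) := by
    rw [pembb, Finset.range_orderEmbOfFin]; exact hk
  obtain ⟨i, hi⟩ := this
  exact ⟨i, Finset.mem_univ i, hi⟩

end CB

/-- The padded squared singular values on `Fin m`. -/
noncomputable def dC {m n : ℕ} (σ : Fin (min m n) → ℝ) : Fin m → ℂ :=
  fun i => if h : (i : ℕ) < min m n then ((σ ⟨(i : ℕ), h⟩ : ℝ) : ℂ) ^ 2 else 0

/-- The square of the `r`-mean square volume: `avol_r(A)² = Σ_{|I|=|J|=r} |det A_{I,J}|²`. -/
noncomputable def avolSq (r : ℕ) {m n : ℕ} (A : Matrix (Fin m) (Fin n) ℂ) : ℝ :=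
  ∑ I ∈ ((Finset.univ : Finset (Fin m)).powersetCard r).attach,
    ∑ J ∈ ((Finset.univ : Finset (Fin n)).powersetCard r).attach,
      ‖Matrix.det (A.submatrix
        (I.1.orderEmbOfFin ((Finset.mem_powersetCard.mp I.2).2))
        (J.1.orderEmbOfFin ((Finset.mem_powersetCard.mp J.2).2)))‖ ^ 2

/-- `σ : Fin (min m n) → ℝ` is the decreasing sequence of singular values of `A`:
nonnegative, antitone, and `A` has a singular value decomposition with these values. -/
def IsSingularValues {m n : ℕ} (A : Matrix (Fin m) (Fin n) ℂ)
    (σ : Fin (min m n) → ℝ) : Prop :=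
  Antitone σ ∧ (∀ i, 0 ≤ σ i) ∧
  ∃ U ∈ Matrix.unitaryGroup (Fin m) ℂ, ∃ V ∈ Matrix.unitaryGroup (Fin n) ℂ,
    A = U * (Matrix.of fun (i : Fin m) (j : Fin n) =>
        if h : (i : ℕ) = (j : ℕ) ∧ (i : ℕ) < min m n
        then (σ ⟨(i : ℕ), h.2⟩ : ℂ) else 0) * V

/-- `avol_r(A)²` is the `r`-th elementary symmetric polynomial in the squares of
the singular values of `A`. -/
theorem avolSq_eq_esymm_singularValues {m n r : ℕ} (hr : 1 ≤ r) (hrp : r ≤ min m n)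
    (A : Matrix (Fin m) (Fin n) ℂ) (σ : Fin (min m n) → ℝ)
    (hσ : IsSingularValues A σ) :
    avolSq r A =
      ∑ I ∈ ((Finset.univ : Finset (Fin (min m n))).powersetCard r), ∏ i ∈ I, σ i ^ 2 := by
  classical
  obtain ⟨-, -, U, hU, V, hV, hA⟩ := hσ
  apply Complex.ofReal_injective
  -- unitary facts
  have hVV : V * Vᴴ = 1 := by
    have h := (Matrix.mem_unitaryGroup_iff).mp hV
    rwa [Matrix.star_eq_conjTranspose] at h
  have hUU : Uᴴ * U = 1 := by
    have h := (Matrix.mem_unitaryGroup_iff').mp hU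
    rwa [Matrix.star_eq_conjTranspose] at h
  -- D * Dᴴ is the diagonal of squared singular values
  have hDD : (Matrix.of fun (i : Fin m) (j : Fin n) =>
        if h : (i : ℕ) = (j : ℕ) ∧ (i : ℕ) < min m n
        then (σ ⟨(i : ℕ), h.2⟩ : ℂ) else 0) *
      (Matrix.of fun (i : Fin m) (j : Fin n) =>
        if h : (i : ℕ) = (j : ℕ) ∧ (i : ℕ) < min m n
        then (σ ⟨(i : ℕ), h.2⟩ : ℂ) else 0)ᴴ = diagonal (dC σ) := by
    ext i j
    rw [mul_apply]
    by_cases hij : i = j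
    · subst hij
      rw [diagonal_apply_eq]
      by_cases hi : (i : ℕ) < min m n
      · rw [Finset.sum_eq_single (⟨(i : ℕ), lt_of_lt_of_le hi (min_le_right m n)⟩ : Fin n)]
        · rw [conjTranspose_apply, of_apply, dif_pos ⟨rfl, hi⟩]
          simp [dC, hi, sq, Complex.conj_ofReal]
        · intro k _ hk
          rw [of_apply, dif_neg, zero_mul]
          rintro ⟨h1, -⟩
          exact hk (Fin.ext h1.symm)
        · intro h; exact absurd (Finset.mem_univ _) h
      · trans (0 : ℂ)
        · exact Finset.sum_eq_zero fun k _ => by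
            rw [of_apply, dif_neg (fun hc => hi hc.2), zero_mul]
        · simp [dC, hi]
    · rw [diagonal_apply_ne _ hij]
      refine Finset.sum_eq_zero fun k _ => ?_
      rw [of_apply, conjTranspose_apply, of_apply]
      by_cases h1 : (i : ℕ) = (k : ℕ) ∧ (i : ℕ) < min m n
      · have hneg : ¬((j : ℕ) = (k : ℕ) ∧ (j : ℕ) < min m n) :=
          fun hc => hij (Fin.ext (h1.1.trans hc.1.symm))
        rw [dif_neg hneg, star_zero, mul_zero]
      · rw [dif_neg h1, zero_mul]
  have hAAH : A * Aᴴ = U * (diagonal (dC σ) * Uᴴ) := by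
    rw [hA]
    simp only [conjTranspose_mul, Matrix.mul_assoc]
    rw [← Matrix.mul_assoc V Vᴴ, hVV, Matrix.one_mul, ← Matrix.mul_assoc _ _ Uᴴ, hDD]
  -- abbreviations
  have habs : ∀ z : ℂ, ((‖z‖ ^ 2 : ℝ) : ℂ) = z * (starRingEnd ℂ) z := fun z => by
    rw [Complex.sq_norm]
    exact (Complex.mul_conj z).symm
  have e1 : ((avolSq r A : ℝ) : ℂ) =
      ∑ I ∈ ((Finset.univ : Finset (Fin m)).powersetCard r).attach,
        ∑ J ∈ ((Finset.univ : Finset (Fin n)).powersetCard r).attach,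
          det (A.submatrix (pembb I.1 I.2) (pembb J.1 J.2)) *
            (starRingEnd ℂ) (det (A.submatrix (pembb I.1 I.2) (pembb J.1 J.2))) := by
    simp only [avolSq]
    push_cast
    exact Finset.sum_congr rfl fun I _ => Finset.sum_congr rfl fun J _ => by
      rw [← habs _]
      push_cast
      rfl
  rw [e1]
  have e2 : ∀ I : {x // x ∈ (Finset.univ : Finset (Fin m)).powersetCard r},
      ∑ J ∈ ((Finset.univ : Finset (Fin n)).powersetCard r).attach,
          det (A.submatrix (pembb I.1 I.2) (pembb J.1 J.2)) *
            (starRingEnd ℂ) (det (A.submatrix (pembb I.1 I.2) (pembb J.1 J.2)))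
        = det ((A * Aᴴ).submatrix (pembb I.1 I.2) (pembb I.1 I.2)) := by
    intro I
    rw [cauchyBinet']
    refine Finset.sum_congr rfl fun J _ => ?_
    congr 1
    rw [← Matrix.conjTranspose_submatrix, Matrix.det_conjTranspose]
    rfl
  rw [Finset.sum_congr rfl fun I _ => e2 I]
  have e3 : ∀ I : {x // x ∈ (Finset.univ : Finset (Fin m)).powersetCard r},
      det ((A * Aᴴ).submatrix (pembb I.1 I.2) (pembb I.1 I.2))
        = ∑ K ∈ ((Finset.univ : Finset (Fin m)).powersetCard r).attach,
            ∑ L ∈ ((Finset.univ : Finset (Fin m)).powersetCard r).attach,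
              det ((diagonal (dC σ)).submatrix (pembb K.1 K.2) (pembb L.1 L.2)) *
                (det (Uᴴ.submatrix (pembb L.1 L.2) (pembb I.1 I.2)) *
                  det (U.submatrix (pembb I.1 I.2) (pembb K.1 K.2))) := by
    intro I
    rw [hAAH, cauchyBinet']
    refine Finset.sum_congr rfl fun K _ => ?_
    rw [cauchyBinet', Finset.mul_sum]
    exact Finset.sum_congr rfl fun L _ => by ring
  rw [Finset.sum_congr rfl fun I _ => e3 I]
  have e4 : ∀ (K L : {x // x ∈ (Finset.univ : Finset (Fin m)).powersetCard r}),
      ∑ I ∈ ((Finset.univ : Finset (Fin m)).powersetCard r).attach,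
          det (Uᴴ.submatrix (pembb L.1 L.2) (pembb I.1 I.2)) *
            det (U.submatrix (pembb I.1 I.2) (pembb K.1 K.2))
        = if L.1 = K.1 then 1 else 0 := by
    intro K L
    rw [← cauchyBinet' Uᴴ U L.1 L.2 K.1 K.2, hUU, det_one_minor]
  trans (∑ K ∈ ((Finset.univ : Finset (Fin m)).powersetCard r).attach,
      ∑ L ∈ ((Finset.univ : Finset (Fin m)).powersetCard r).attach,
        det ((diagonal (dC σ)).submatrix (pembb K.1 K.2) (pembb L.1 L.2)) *
          (if L.1 = K.1 then 1 else 0))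
  · rw [Finset.sum_comm]
    refine Finset.sum_congr rfl fun K _ => ?_
    rw [Finset.sum_comm]
    refine Finset.sum_congr rfl fun L _ => ?_
    rw [← Finset.mul_sum, e4 K L]
  trans (∑ K ∈ ((Finset.univ : Finset (Fin m)).powersetCard r).attach,
      det ((diagonal (dC σ)).submatrix (pembb K.1 K.2) (pembb K.1 K.2)))
  · refine Finset.sum_congr rfl fun K _ => ?_
    rw [Finset.sum_eq_single_of_mem K (Finset.mem_attach _ _)
      (fun L _ hLK => by rw [if_neg (fun hc => hLK (Subtype.ext hc)), mul_zero]),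
      if_pos rfl, mul_one]
  trans (∑ K ∈ ((Finset.univ : Finset (Fin m)).powersetCard r).attach, ∏ k ∈ K.1, dC σ k)
  · exact Finset.sum_congr rfl fun K _ => det_diagonal_minor _ K.1 K.2
  trans (∑ K ∈ (Finset.univ : Finset (Fin m)).powersetCard r, ∏ k ∈ K, dC σ k)
  · exact Finset.sum_attach ((Finset.univ : Finset (Fin m)).powersetCard r) (fun t => ∏ k ∈ t, dC σ k)
  have e5 : ((∑ I ∈ (Finset.univ : Finset (Fin (min m n))).powersetCard r,
      ∏ i ∈ I, σ i ^ 2 : ℝ) : ℂ)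
      = ∑ I ∈ (Finset.univ : Finset (Fin (min m n))).powersetCard r,
          ∏ i ∈ I, ((σ i : ℝ) : ℂ) ^ 2 := by
    push_cast
    rfl
  rw [e5]
  have hmle : min m n ≤ m := min_le_left m n
  set f : Fin (min m n) ↪ Fin m := Fin.castLEEmb hmle with hf
  have hsub : ((Finset.univ : Finset (Fin (min m n))).map f).powersetCard r ⊆
      (Finset.univ : Finset (Fin m)).powersetCard r :=
    Finset.powersetCard_mono (Finset.subset_univ _)
  have hvanish : ∀ K ∈ (Finset.univ : Finset (Fin m)).powersetCard r,
      K ∉ ((Finset.univ : Finset (Fin (min m n))).map f).powersetCard r →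
      ∏ k ∈ K, dC σ k = 0 := by
    intro K hK hK'
    have hns : ¬ K ⊆ Finset.univ.map f := fun hsub' =>
      hK' (Finset.mem_powersetCard.mpr ⟨hsub', (Finset.mem_powersetCard.mp hK).2⟩)
    obtain ⟨x, hxK, hx⟩ := Finset.not_subset.mp hns
    refine Finset.prod_eq_zero hxK ?_
    simp only [dC]
    rw [dif_neg]
    intro hxp
    exact hx (Finset.mem_map.mpr ⟨⟨(x : ℕ), hxp⟩, Finset.mem_univ _, Fin.ext (by simp [hf])⟩)
  rw [← Finset.sum_subset hsub hvanish, Finset.powersetCard_map, Finset.sum_map]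
  refine Finset.sum_congr rfl fun I _ => ?_
  rw [show (Finset.mapEmbedding f).toEmbedding I = I.map f from Finset.mapEmbedding_apply,
    Finset.prod_map]
  refine Finset.prod_congr rfl fun i _ => ?_
  simp only [dC]
  rw [dif_pos (show ((f i : Fin m) : ℕ) < min m n by simpa [hf] using i.isLt)]
  norm_cast
end

section
/- For A ∈ ℂ^{m×n} with columns a_1,…,a_n, the geometric rigidity Rig_r(A) := min over r-dimensional subspaces V of max_i dist(a_i, V) satisfies (1/√n)·σ_{r+1}(A) ≤ Rig_r(A) ≤ σ_{r+1}(A). -/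
open Matrix Finset

/-- The maximum euclidean distance of the columns of `A` to the subspace `V`. -/
noncomputable def colDistSup {m n : ℕ} (A : Matrix (Fin m) (Fin n) ℂ)
    (V : Submodule ℂ (EuclideanSpace ℂ (Fin m))) : ℝ :=
  ⨆ j : Fin n, Metric.infDist (show EuclideanSpace ℂ (Fin m) from WithLp.toLp 2 (fun i => A i j)) (V : Set (EuclideanSpace ℂ (Fin m)))

/-- Geometric rigidity: `Rig_r(A)` is the least possible maximum distance of the
columns of `A` to an `r`-dimensional subspace. -/
noncomputable def Rig (r : ℕ) {m n : ℕ} (A : Matrix (Fin m) (Fin n) ℂ) : ℝ :=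
  sInf {x : ℝ | ∃ V : Submodule ℂ (EuclideanSpace ℂ (Fin m)),
    Module.finrank ℂ V = r ∧ x = colDistSup A V}

theorem orthonormal_cols {N : ℕ} {U : Matrix (Fin N) (Fin N) ℂ} (hU : star U * U = 1) :
    Orthonormal ℂ (fun k : Fin N => (show EuclideanSpace ℂ (Fin N) from WithLp.toLp 2 (fun i => U i k))) := by
  rw [orthonormal_iff_ite]
  intro k l
  have h := congrFun (congrFun hU k) l
  simp only [Matrix.mul_apply, Matrix.one_apply, Matrix.star_apply, RCLike.star_def] at h
  simp [PiLp.inner_apply, RCLike.inner_apply, Matrix.mul_apply]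
  rw [← h]
  exact Finset.sum_congr rfl fun _ _ => mul_comm _ _

theorem on_norm_sq_sum {ι : Type*} {E : Type*} [NormedAddCommGroup E] [InnerProductSpace ℂ E]
    {v : ι → E} (hv : Orthonormal ℂ v) (c : ι → ℂ) (s : Finset ι) :
    ‖∑ i ∈ s, c i • v i‖ ^ 2 = ∑ i ∈ s, ‖c i‖ ^ 2 := by
  have h2 : (‖∑ i ∈ s, c i • v i‖ : ℝ) ^ 2
      = RCLike.re (inner (𝕜 := ℂ) (∑ i ∈ s, c i • v i) (∑ i ∈ s, c i • v i)) := by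
    rw [inner_self_eq_norm_sq]
  rw [h2, hv.inner_sum c c s]
  have : ∀ i ∈ s, (starRingEnd ℂ) (c i) * c i = ((‖c i‖ ^ 2 : ℝ) : ℂ) := fun i _ => by
    simpa using RCLike.conj_mul (c i)
  rw [Finset.sum_congr rfl this]
  simp [← Complex.ofReal_pow]

noncomputable def mulVecE {m n : ℕ} (A : Matrix (Fin m) (Fin n) ℂ) :
    EuclideanSpace ℂ (Fin n) →ₗ[ℂ] EuclideanSpace ℂ (Fin m) where
  toFun x := (show EuclideanSpace ℂ (Fin m) from WithLp.toLp 2 (A.mulVec x))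
  map_add' x y := by ext i; simp [Matrix.mulVec_add]
  map_smul' c x := by ext i; simp [Matrix.mulVec_smul]


set_option maxHeartbeats 2000000

/-- `σ_{r+1}(A)/√n ≤ Rig_r(A) ≤ σ_{r+1}(A)`. -/
theorem rigidity_singularValue_bounds {m n r : ℕ} (A : Matrix (Fin m) (Fin n) ℂ)
    (σ : Fin (min m n) → ℝ) (hσ : IsSingularValues A σ) (hr : r < min m n) :
    σ ⟨r, hr⟩ / Real.sqrt n ≤ Rig r A ∧ Rig r A ≤ σ ⟨r, hr⟩ := by
  obtain ⟨hanti, hnn, U, hU, V, hV, hA⟩ := hσ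
  have hrm : r < m := lt_of_lt_of_le hr (min_le_left _ _)
  have hrn : r < n := lt_of_lt_of_le hr (min_le_right _ _)
  have hσr0 : 0 ≤ σ ⟨r, hr⟩ := hnn _
  -- notation
  set S : Matrix (Fin m) (Fin n) ℂ := Matrix.of fun (i : Fin m) (j : Fin n) =>
        if h : (i : ℕ) = (j : ℕ) ∧ (i : ℕ) < min m n
        then (σ ⟨(i : ℕ), h.2⟩ : ℂ) else 0 with hS
  have hUo : Orthonormal ℂ (fun k : Fin m => (show EuclideanSpace ℂ (Fin m) from WithLp.toLp 2 (fun i => U i k))) :=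
    orthonormal_cols (Matrix.mem_unitaryGroup_iff'.mp hU)
  have hWo : Orthonormal ℂ (fun l : Fin n => (show EuclideanSpace ℂ (Fin n) from WithLp.toLp 2 (fun j => (star V) j l))) := by
    apply orthonormal_cols
    rw [star_star]
    exact Matrix.mem_unitaryGroup_iff.mp hV
  set u : Fin m → EuclideanSpace ℂ (Fin m) := fun k => (show EuclideanSpace ℂ (Fin m) from WithLp.toLp 2 (fun i => U i k)) with hu
  set w : Fin n → EuclideanSpace ℂ (Fin n) := fun l => (show EuclideanSpace ℂ (Fin n) from WithLp.toLp 2 (fun j => (star V) j l)) with hw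
  set σ' : Fin n → ℝ := fun l => if h : (l : ℕ) < min m n then σ ⟨l, h⟩ else 0 with hσ'
  set ue : Fin n → EuclideanSpace ℂ (Fin m) := fun l =>
    if h : (l : ℕ) < m then u ⟨l, h⟩ else 0 with hue
  set colE : Fin n → EuclideanSpace ℂ (Fin m) := fun j => (show EuclideanSpace ℂ (Fin m) from WithLp.toLp 2 (fun i => A i j)) with hcolE
  -- key fact 1 : A (w l) = σ' l • ue l
  have key1 : ∀ l : Fin n, mulVecE A (w l) = (σ' l : ℂ) • ue l := by
    have hAV : A * star V = U * S := by
      rw [hA, Matrix.mul_assoc (U * S) V (star V), Matrix.mem_unitaryGroup_iff.mp hV, Matrix.mul_one]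
    intro l
    ext i
    have lhs : mulVecE A (w l) i = (U * S) i l := by
      rw [← hAV]
      simp only [Matrix.mul_apply, mulVecE, LinearMap.coe_mk, AddHom.coe_mk, Matrix.mulVec, dotProduct, hw]
    rw [lhs]
    by_cases hl : (l : ℕ) < min m n
    · have hlm : (l : ℕ) < m := lt_of_lt_of_le hl (min_le_left m n)
      have hval : S ⟨(l : ℕ), hlm⟩ l = (σ ⟨(l : ℕ), hl⟩ : ℂ) := by
        simp [hS, hl]
      have hmain : (U * S) i l = U i ⟨(l : ℕ), hlm⟩ * σ ⟨(l : ℕ), hl⟩ := by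
        rw [Matrix.mul_apply, Finset.sum_eq_single (⟨(l : ℕ), hlm⟩ : Fin m)]
        · rw [hval]
        · intro p _ hp
          have hz : S p l = 0 := by
            rw [hS]
            simp only [Matrix.of_apply]
            rw [dif_neg]
            rintro ⟨h1, -⟩
            exact hp (Fin.ext h1)
          rw [hz, mul_zero]
        · intro h; exact absurd (Finset.mem_univ _) h
      rw [hmain]
      have h1 : σ' l = σ ⟨(l : ℕ), hl⟩ := by simp only [hσ']; rw [dif_pos hl]
      have h2 : ue l = u ⟨(l : ℕ), hlm⟩ := by simp only [hue]; rw [dif_pos hlm]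
      rw [h1, h2, hu]
      simp only [PiLp.smul_apply, smul_eq_mul]
      ring
    · have hmain : (U * S) i l = 0 := by
        rw [Matrix.mul_apply]
        apply Finset.sum_eq_zero
        intro p _
        have hz : S p l = 0 := by
          rw [hS]
          simp only [Matrix.of_apply]
          rw [dif_neg]
          rintro ⟨h1, h2⟩
          exact hl (h1 ▸ h2)
        rw [hz, mul_zero]
      rw [hmain]
      have h1 : σ' l = 0 := by simp only [hσ']; rw [dif_neg hl]
      rw [h1]
      simp
  -- column decomposition
  have key2 : ∀ j : Fin n, colE j = ∑ l : Fin n, (V l j * (σ' l : ℂ)) • ue l := by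
      intro j
      have hdelta : (WithLp.toLp 2 (Pi.single j 1) : EuclideanSpace ℂ (Fin n)) = ∑ l : Fin n, V l j • w l := by
        ext t
        have hs : (∑ l : Fin n, V l j • w l) t = ∑ l : Fin n, V l j * (starRingEnd ℂ) (V l t) := by
          rw [WithLp.ofLp_sum, Finset.sum_apply]
          refine Finset.sum_congr rfl fun l _ => ?_
          simp [hw, Matrix.star_apply]
        rw [hs]
        have hVV := congrFun (congrFun (Matrix.mem_unitaryGroup_iff'.mp hV) t) j
        simp only [Matrix.mul_apply, Matrix.star_apply, Matrix.one_apply, RCLike.star_def] at hVV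
        rw [WithLp.ofLp_toLp, Pi.single_apply]
        rw [← hVV]
        exact Finset.sum_congr rfl fun l _ => mul_comm _ _
      have hcol : colE j = mulVecE A (WithLp.toLp 2 (Pi.single j 1)) := by
        simp only [hcolE]
        ext i
        show A i j = A.mulVec (Pi.single j 1) i
        rw [Matrix.mulVec_single]
        exact (mul_one _).symm
      have hsum : colE j = ∑ l : Fin n, V l j • (mulVecE A (w l)) := by
        rw [hcol, hdelta, map_sum]
        exact Finset.sum_congr rfl fun l _ => (map_smul (mulVecE A) _ _)
      rw [hsum]
      refine Finset.sum_congr rfl fun l _ => ?_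
      rw [key1 l, smul_smul]
  -- column norms of V
  have key3 : ∀ j : Fin n, ∑ l : Fin n, ‖V l j‖ ^ 2 = 1 := by
      intro j
      have hVV := congrFun (congrFun (Matrix.mem_unitaryGroup_iff'.mp hV) j) j
      simp only [Matrix.mul_apply, Matrix.star_apply, Matrix.one_apply, RCLike.star_def, eq_self_iff_true, if_true] at hVV
      have hcast : ((∑ l : Fin n, ‖V l j‖ ^ 2 : ℝ) : ℂ) = 1 := by
        push_cast
        rw [← hVV]
        refine Finset.sum_congr rfl fun l _ => ?_
        simpa using (RCLike.conj_mul (V l j)).symm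
      exact_mod_cast hcast
  -- the subspace for the upper bound
  set uu : Fin r → EuclideanSpace ℂ (Fin m) := fun i => u ⟨i, lt_trans i.2 hrm⟩ with huu
  set Vr : Submodule ℂ (EuclideanSpace ℂ (Fin m)) := Submodule.span ℂ (Set.range uu) with hVr
  have hVr_rank : Module.finrank ℂ Vr = r := by

    have hinj : Function.Injective (fun i : Fin r => (⟨i, lt_trans i.2 hrm⟩ : Fin m)) := by
      intro a b hab
      exact Fin.ext (by simpa using congrArg Fin.val hab)
    have huuo : Orthonormal ℂ uu := by
      rw [huu]; exact hUo.comp _ hinj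
    rw [hVr, finrank_span_eq_card huuo.linearIndependent, Fintype.card_fin]
  have upper_col : ∀ j : Fin n, Metric.infDist (colE j) (Vr : Set (EuclideanSpace ℂ (Fin m))) ≤ σ ⟨r, hr⟩ := by

    have hinj : Function.Injective (fun i : Fin r => (⟨i, lt_trans i.2 hrm⟩ : Fin m)) := by
      intro a b hab
      exact Fin.ext (by simpa using congrArg Fin.val hab)
    have huuo : Orthonormal ℂ uu := by
      rw [huu]; exact hUo.comp _ hinj
    intro j
    set c : Fin n → ℂ := fun l => V l j * (σ' l : ℂ) with hc
    set t : Finset (Fin n) := univ.filter (fun l => (l : ℕ) < r) with ht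
    set t2 : Finset (Fin n) := univ.filter (fun l => r ≤ (l : ℕ) ∧ (l : ℕ) < min m n) with ht2
    set y : EuclideanSpace ℂ (Fin m) := ∑ l ∈ t, c l • ue l with hy
    have hymem : y ∈ Vr := by
      rw [hy, hVr]
      apply Submodule.sum_mem
      intro l hl
      have hlr : (l : ℕ) < r := by
        have := Finset.mem_filter.mp hl; exact this.2
      apply Submodule.smul_mem
      apply Submodule.subset_span
      refine ⟨⟨(l : ℕ), hlr⟩, ?_⟩
      simp only [huu, hue]
      rw [dif_pos (lt_trans hlr hrm)]
    have hdiff : colE j - y = ∑ l ∈ t2, c l • ue l := by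
      have hsplit := Finset.sum_filter_add_sum_filter_not univ (fun l : Fin n => (l : ℕ) < r)
        (fun l => c l • ue l)
      have h1 : colE j - y = ∑ l ∈ univ.filter (fun l : Fin n => ¬ (l : ℕ) < r), c l • ue l := by
        rw [key2 j, ← hsplit, hy, ht]
        abel
      rw [h1]
      symm
      apply Finset.sum_subset
      · intro l hl
        simp only [ht2, Finset.mem_filter, Finset.mem_univ, true_and] at hl
        simp only [Finset.mem_filter, Finset.mem_univ, true_and]
        omega
      · intro l hl hl2
        simp only [Finset.mem_filter, Finset.mem_univ, true_and] at hl
        simp only [ht2, Finset.mem_filter, Finset.mem_univ, true_and] at hl2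
        have hlmin : ¬ (l : ℕ) < min m n := by omega
        have : σ' l = 0 := by simp only [hσ']; rw [dif_neg hlmin]
        rw [hc]
        simp [this]
    -- orthonormal family over the subtype of t2
    have hdist : ‖colE j - y‖ ^ 2 ≤ (σ ⟨r, hr⟩) ^ 2 := by
      set v : {x // x ∈ t2} → EuclideanSpace ℂ (Fin m) := fun x =>
        u ⟨(x.1 : ℕ), lt_of_lt_of_le ((Finset.mem_filter.mp x.2).2).2 (min_le_left m n)⟩ with hv
      have hvo : Orthonormal ℂ v := by
        rw [hv]
        apply hUo.comp
        intro a b hab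
        exact Subtype.ext (Fin.ext (by simpa using congrArg Fin.val hab))
      have hre : colE j - y = ∑ x ∈ t2.attach, c x.1 • v x := by
        rw [hdiff]
        rw [← Finset.sum_attach t2 (fun l => c l • ue l)]
        refine Finset.sum_congr rfl fun x _ => ?_
        congr 1
        simp only [hue, hv]
        rw [dif_pos]
      rw [hre, on_norm_sq_sum hvo]
      have hcb : ∀ x ∈ t2.attach, ‖c x.1‖ ^ 2 ≤ (σ ⟨r, hr⟩)^2 * ‖V x.1 j‖ ^ 2 := by
        intro x _
        obtain ⟨hxr, hxmin⟩ := (Finset.mem_filter.mp x.2).2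
        have hσ'x : σ' x.1 = σ ⟨(x.1 : ℕ), hxmin⟩ := by simp only [hσ']; rw [dif_pos hxmin]
        have hle : σ ⟨(x.1 : ℕ), hxmin⟩ ≤ σ ⟨r, hr⟩ := hanti (by exact hxr)
        have hnn' : 0 ≤ σ ⟨(x.1 : ℕ), hxmin⟩ := hnn _
        rw [hc]
        simp only [norm_mul, mul_pow, Complex.norm_real]
        rw [hσ'x]
        have : |σ ⟨(x.1 : ℕ), hxmin⟩| ^ 2 ≤ (σ ⟨r, hr⟩) ^ 2 := by
          rw [abs_of_nonneg hnn']
          exact pow_le_pow_left₀ hnn' hle 2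
        calc ‖V x.1 j‖ ^ 2 * ‖(σ ⟨(x.1 : ℕ), hxmin⟩ : ℝ)‖ ^ 2
            ≤ ‖V x.1 j‖ ^ 2 * (σ ⟨r, hr⟩) ^ 2 := by
              apply mul_le_mul_of_nonneg_left _ (by positivity)
              simpa [Real.norm_eq_abs] using this
          _ = (σ ⟨r, hr⟩) ^ 2 * ‖V x.1 j‖ ^ 2 := mul_comm _ _
      calc ∑ x ∈ t2.attach, ‖c x.1‖ ^ 2 ≤ ∑ x ∈ t2.attach, (σ ⟨r, hr⟩)^2 * ‖V x.1 j‖ ^ 2 :=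
            Finset.sum_le_sum hcb
        _ = (σ ⟨r, hr⟩)^2 * ∑ x ∈ t2.attach, ‖V x.1 j‖ ^ 2 := by rw [Finset.mul_sum]
        _ ≤ (σ ⟨r, hr⟩)^2 * 1 := by
            apply mul_le_mul_of_nonneg_left _ (by positivity)
            rw [Finset.sum_attach t2 (fun l => ‖V l j‖ ^ 2)]
            rw [← key3 j]
            apply Finset.sum_le_sum_of_subset_of_nonneg (Finset.subset_univ _)
            intro l _ _
            positivity
        _ = (σ ⟨r, hr⟩)^2 := mul_one _
    have hnormle : ‖colE j - y‖ ≤ σ ⟨r, hr⟩ := by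
      have h0 : (0:ℝ) ≤ σ ⟨r, hr⟩ := hnn _
      nlinarith [norm_nonneg (colE j - y)]
    calc Metric.infDist (colE j) (Vr : Set (EuclideanSpace ℂ (Fin m)))
        ≤ dist (colE j) y := Metric.infDist_le_dist_of_mem hymem
      _ = ‖colE j - y‖ := dist_eq_norm _ _
      _ ≤ σ ⟨r, hr⟩ := hnormle
  have hcds : ∀ Wx : Submodule ℂ (EuclideanSpace ℂ (Fin m)),
      colDistSup A Wx = ⨆ j : Fin n, Metric.infDist (colE j) (Wx : Set (EuclideanSpace ℂ (Fin m))) := by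
    intro Wx
    rw [hcolE]
    rfl
  have lower_bd : ∀ W : Submodule ℂ (EuclideanSpace ℂ (Fin m)), Module.finrank ℂ W = r →
      σ ⟨r, hr⟩ ≤ Real.sqrt n * colDistSup A W := by
    intro W hW
    rw [hcds W]
    set D : ℝ := ⨆ j : Fin n, Metric.infDist (colE j) (W : Set (EuclideanSpace ℂ (Fin m))) with hD
    have hD0 : 0 ≤ D := Real.iSup_nonneg fun _ => Metric.infDist_nonneg
    have hr1n : r + 1 ≤ n := hrn
    have hr1min : r + 1 ≤ min m n := hr
    set ww : Fin (r+1) → EuclideanSpace ℂ (Fin n) :=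
      fun i => w ⟨(i : ℕ), lt_of_lt_of_le i.2 hr1n⟩ with hww
    have hwwo : Orthonormal ℂ ww := by
      rw [hww]
      exact hWo.comp _ (fun a b hab => Fin.ext (by simpa using congrArg Fin.val hab))
    set T : Submodule ℂ (EuclideanSpace ℂ (Fin n)) := Submodule.span ℂ (Set.range ww) with hT
    have hTrank : Module.finrank ℂ T = r + 1 := by
      rw [hT, finrank_span_eq_card hwwo.linearIndependent, Fintype.card_fin]
    set ψ : T →ₗ[ℂ] W :=
      ((Submodule.orthogonalProjectionOnto W).toLinearMap.comp (mulVecE A)).comp T.subtype with hψ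
    have hnotinj : ¬ Function.Injective ψ := by
      intro hinj
      have hle := LinearMap.finrank_le_finrank_of_injective hinj
      rw [hTrank, hW] at hle
      omega
    have hker : LinearMap.ker ψ ≠ ⊥ := fun h => hnotinj (LinearMap.ker_eq_bot.mp h)
    obtain ⟨xT, hxker, hxne⟩ := Submodule.ne_bot_iff _ |>.mp hker
    set x : EuclideanSpace ℂ (Fin n) := (xT : EuclideanSpace ℂ (Fin n)) with hx
    have hxne' : x ≠ 0 := by
      intro h
      exact hxne (Subtype.ext h)
    have hxnorm : 0 < ‖x‖ := norm_pos_iff.mpr hxne'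
    have hproj : (Submodule.orthogonalProjectionOnto W) (mulVecE A x) = 0 := by
      have := LinearMap.mem_ker.mp hxker
      exact this
    obtain ⟨cc, hcc⟩ := (Submodule.mem_span_range_iff_exists_fun ℂ).mp (by rw [← hT]; exact xT.2)
    rw [← hx] at hcc
    set Av : EuclideanSpace ℂ (Fin m) := mulVecE A x with hAv
    -- norm of x
    have hxsq : ‖x‖ ^ 2 = ∑ i : Fin (r+1), ‖cc i‖ ^ 2 := by
      rw [← hcc]
      exact on_norm_sq_sum hwwo cc univ
    -- A x 
    have hAveq : Av = ∑ i : Fin (r+1),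
        (cc i * (σ ⟨(i : ℕ), lt_of_lt_of_le i.2 hr1min⟩ : ℂ)) •
          u ⟨(i : ℕ), lt_of_lt_of_le (lt_of_lt_of_le i.2 hr1min) (min_le_left m n)⟩ := by
      rw [hAv, ← hcc, map_sum]
      refine Finset.sum_congr rfl fun i _ => ?_
      rw [_root_.map_smul, hww]
      rw [key1 ⟨(i : ℕ), lt_of_lt_of_le i.2 hr1n⟩]
      have h1 : σ' ⟨(i : ℕ), lt_of_lt_of_le i.2 hr1n⟩ = σ ⟨(i : ℕ), lt_of_lt_of_le i.2 hr1min⟩ := by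
        simp only [hσ']
        rw [dif_pos]
        exact lt_of_lt_of_le i.2 hr1min
      have h2 : ue ⟨(i : ℕ), lt_of_lt_of_le i.2 hr1n⟩ =
          u ⟨(i : ℕ), lt_of_lt_of_le (lt_of_lt_of_le i.2 hr1min) (min_le_left m n)⟩ := by
        simp only [hue]
        rw [dif_pos]
        exact lt_of_lt_of_le (lt_of_lt_of_le i.2 hr1min) (min_le_left m n)
      rw [h1, h2, smul_smul]
    have hAvsq : (σ ⟨r, hr⟩) ^ 2 * ‖x‖ ^ 2 ≤ ‖Av‖ ^ 2 := by
      have horth : Orthonormal ℂ (fun i : Fin (r+1) =>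
          u ⟨(i : ℕ), lt_of_lt_of_le (lt_of_lt_of_le i.2 hr1min) (min_le_left m n)⟩) :=
        hUo.comp _ (fun a b hab => Fin.ext (by simpa using congrArg Fin.val hab))
      have := on_norm_sq_sum horth
        (fun i => cc i * (σ ⟨(i : ℕ), lt_of_lt_of_le i.2 hr1min⟩ : ℂ)) univ
      rw [hAveq, this, hxsq, Finset.mul_sum]
      apply Finset.sum_le_sum
      intro i _
      have hle : σ ⟨r, hr⟩ ≤ σ ⟨(i : ℕ), lt_of_lt_of_le i.2 hr1min⟩ := by
        apply hanti
        simp [Fin.le_def]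
        omega
      have h0 : 0 ≤ σ ⟨(i : ℕ), lt_of_lt_of_le i.2 hr1min⟩ := hnn _
      rw [norm_mul]
      rw [mul_pow]
      rw [Complex.norm_real, Real.norm_eq_abs, abs_of_nonneg h0]
      rw [mul_comm ((σ ⟨r, hr⟩)^2) _]
      apply mul_le_mul_of_nonneg_left _ (by positivity)
      exact pow_le_pow_left₀ (hnn _) hle 2
    have hAvge : σ ⟨r, hr⟩ * ‖x‖ ≤ ‖Av‖ := by
      have h1 : (σ ⟨r, hr⟩ * ‖x‖) ^ 2 ≤ ‖Av‖ ^ 2 := by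
        rw [mul_pow]; exact hAvsq
      have := Real.sqrt_le_sqrt h1
      rwa [Real.sqrt_sq (mul_nonneg (hnn _) (norm_nonneg _)), Real.sqrt_sq (norm_nonneg _)] at this
    -- per-column distances
    haveI : Nonempty (W : Set (EuclideanSpace ℂ (Fin m))) := ⟨⟨0, W.zero_mem⟩⟩
    have hcols : ∀ j : Fin n,
        ‖colE j - ((Submodule.orthogonalProjectionOnto W) (colE j) : EuclideanSpace ℂ (Fin m))‖ ≤ D := by
      intro j
      have h1 : ‖colE j - ((Submodule.orthogonalProjectionOnto W) (colE j) : EuclideanSpace ℂ (Fin m))‖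
          ≤ Metric.infDist (colE j) (W : Set (EuclideanSpace ℂ (Fin m))) := by
        rw [Metric.infDist_eq_iInf]
        apply le_ciInf
        intro z
        rw [dist_eq_norm, ← Submodule.starProjection_apply, Submodule.starProjection_minimal]
        exact ciInf_le ⟨0, by rintro _ ⟨p, rfl⟩; positivity⟩ (⟨z.1, z.2⟩ : W)
      refine h1.trans ?_
      rw [hD]
      exact le_ciSup (f := fun j : Fin n => Metric.infDist (colE j) (W : Set (EuclideanSpace ℂ (Fin m)))) (Set.Finite.bddAbove (Set.finite_range _)) j
    set z : EuclideanSpace ℂ (Fin m) :=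
      ∑ j : Fin n, x j • ((Submodule.orthogonalProjectionOnto W) (colE j) : EuclideanSpace ℂ (Fin m)) with hz
    have hzmem : z ∈ W :=
      Submodule.sum_mem _ fun j _ => Submodule.smul_mem _ _ (SetLike.coe_mem _)
    have hAvz : ‖Av‖ ≤ ‖Av - z‖ := by
      have h2 : Av - ((Submodule.orthogonalProjectionOnto W) Av : EuclideanSpace ℂ (Fin m)) = Av := by
        rw [hproj]; simp
      have h1 : ‖Av - ((Submodule.orthogonalProjectionOnto W) Av : EuclideanSpace ℂ (Fin m))‖ ≤ ‖Av - z‖ := by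
        rw [← Submodule.starProjection_apply, Submodule.starProjection_minimal]
        exact ciInf_le ⟨0, by rintro _ ⟨p, rfl⟩; positivity⟩ (⟨z, hzmem⟩ : W)
      rwa [h2] at h1
    have hAvsum : Av = ∑ j : Fin n, x j • colE j := by
      ext i
      have h1 : Av i = ∑ j : Fin n, A i j * x j := rfl
      have h2 : (∑ j : Fin n, x j • colE j) i = ∑ j : Fin n, x j * A i j := by
        rw [WithLp.ofLp_sum, Finset.sum_apply]
        refine Finset.sum_congr rfl fun l _ => ?_
        simp [hcolE]
      rw [h1, h2]
      exact Finset.sum_congr rfl fun l _ => mul_comm _ _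
    have hAvz2 : Av - z = ∑ j : Fin n,
        x j • (colE j - ((Submodule.orthogonalProjectionOnto W) (colE j) : EuclideanSpace ℂ (Fin m))) := by
      rw [hAvsum, hz, ← Finset.sum_sub_distrib]
      exact Finset.sum_congr rfl fun j _ => (smul_sub _ _ _).symm
    have hbound : ‖Av - z‖ ≤ (∑ j : Fin n, ‖x j‖) * D := by
      rw [hAvz2]
      calc ‖∑ j : Fin n, x j • (colE j - ((Submodule.orthogonalProjectionOnto W) (colE j) : EuclideanSpace ℂ (Fin m)))‖
          ≤ ∑ j : Fin n, ‖x j • (colE j - ((Submodule.orthogonalProjectionOnto W) (colE j) : EuclideanSpace ℂ (Fin m)))‖ :=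
            norm_sum_le _ _
        _ = ∑ j : Fin n, ‖x j‖ * ‖colE j - ((Submodule.orthogonalProjectionOnto W) (colE j) : EuclideanSpace ℂ (Fin m))‖ := by
            simp [norm_smul]
        _ ≤ ∑ j : Fin n, ‖x j‖ * D :=
            Finset.sum_le_sum fun j _ => mul_le_mul_of_nonneg_left (hcols j) (norm_nonneg _)
        _ = (∑ j : Fin n, ‖x j‖) * D := (Finset.sum_mul _ _ _).symm
    have hcs : (∑ j : Fin n, ‖x j‖) ≤ Real.sqrt n * ‖x‖ := by
      have h1 : (∑ j : Fin n, ‖x j‖) ^ 2 ≤ (n : ℝ) * ∑ j : Fin n, ‖x j‖ ^ 2 := by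
        have := sq_sum_le_card_mul_sum_sq (s := (univ : Finset (Fin n))) (f := fun j => ‖x j‖)
        simpa using this
      have hxn : ‖x‖ ^ 2 = ∑ j : Fin n, ‖x j‖ ^ 2 := by
        rw [EuclideanSpace.norm_eq]
        rw [Real.sq_sqrt (by positivity)]
      have h2 : (∑ j : Fin n, ‖x j‖) ^ 2 ≤ (Real.sqrt n * ‖x‖) ^ 2 := by
        rw [mul_pow, Real.sq_sqrt (Nat.cast_nonneg n), hxn]
        exact h1
      have := Real.sqrt_le_sqrt h2
      rwa [Real.sqrt_sq (by positivity), Real.sqrt_sq (by positivity)] at this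
    have hfinal : σ ⟨r, hr⟩ * ‖x‖ ≤ (Real.sqrt n * D) * ‖x‖ := by
      calc σ ⟨r, hr⟩ * ‖x‖ ≤ ‖Av‖ := hAvge
        _ ≤ ‖Av - z‖ := hAvz
        _ ≤ (∑ j : Fin n, ‖x j‖) * D := hbound
        _ ≤ (Real.sqrt n * ‖x‖) * D := mul_le_mul_of_nonneg_right hcs hD0
        _ = (Real.sqrt n * D) * ‖x‖ := by ring
    exact le_of_mul_le_mul_right hfinal hxnorm
  -- assemble
  have hset_ne : {x : ℝ | ∃ W : Submodule ℂ (EuclideanSpace ℂ (Fin m)),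
      Module.finrank ℂ W = r ∧ x = colDistSup A W}.Nonempty := ⟨colDistSup A Vr, Vr, hVr_rank, rfl⟩
  have hbdd : BddBelow {x : ℝ | ∃ W : Submodule ℂ (EuclideanSpace ℂ (Fin m)),
      Module.finrank ℂ W = r ∧ x = colDistSup A W} := by
    refine ⟨0, fun x hx => ?_⟩
    obtain ⟨W, _, rfl⟩ := hx
    exact Real.iSup_nonneg fun j => Metric.infDist_nonneg
  have hsqrtn : 0 < Real.sqrt n := Real.sqrt_pos.mpr (by exact_mod_cast Nat.pos_of_ne_zero (by omega))
  constructor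
  · apply le_csInf hset_ne
    rintro x ⟨W, hW, rfl⟩
    rw [div_le_iff₀ hsqrtn]
    calc σ ⟨r, hr⟩ ≤ Real.sqrt n * colDistSup A W := lower_bd W hW
    _ = colDistSup A W * Real.sqrt n := mul_comm _ _
  · apply le_trans (csInf_le hbdd ⟨Vr, hVr_rank, rfl⟩)
    rw [hcds Vr]
    exact Real.iSup_le (fun j => upper_col j) hσr0
end

section
/- The (r+1)-st singular value of A equals the distance in operator 2-norm from A to the set of matrices of rank at most r: σ_{r+1}(A) = min{ ‖A − B‖₂ : rank(B) ≤ r }. -/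
open Matrix Finset

/-- The spectral (operator 2-) norm of a matrix. -/
noncomputable def specNorm {m n : ℕ} (A : Matrix (Fin m) (Fin n) ℂ) : ℝ :=
  ‖LinearMap.toContinuousLinearMap (Matrix.toEuclideanLin A)‖

open scoped InnerProductSpace

section Infra

variable {m n k : ℕ}

def dmat (d : Fin (min m n) → ℝ) : Matrix (Fin m) (Fin n) ℂ :=
  Matrix.of fun (i : Fin m) (j : Fin n) =>
    if h : (i : ℕ) = (j : ℕ) ∧ (i : ℕ) < min m n
    then (d ⟨(i : ℕ), h.2⟩ : ℂ) else 0

lemma toEuclideanLin_mul' {a b c : ℕ} (M : Matrix (Fin a) (Fin b) ℂ) (N : Matrix (Fin b) (Fin c) ℂ) :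
    Matrix.toEuclideanLin (M * N) = (Matrix.toEuclideanLin M).comp (Matrix.toEuclideanLin N) := by
  apply LinearMap.ext; intro x
  simp [Matrix.toEuclideanLin_apply, Matrix.mulVec_mulVec]

lemma toEuclideanLin_one' {a : ℕ} : Matrix.toEuclideanLin (1 : Matrix (Fin a) (Fin a) ℂ) = LinearMap.id := by
  apply LinearMap.ext; intro x
  simp [Matrix.toEuclideanLin_apply]

noncomputable def uIso (V : Matrix (Fin k) (Fin k) ℂ) (hV : V ∈ Matrix.unitaryGroup (Fin k) ℂ) :
    EuclideanSpace ℂ (Fin k) ≃ₗᵢ[ℂ] EuclideanSpace ℂ (Fin k) :=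
  LinearEquiv.isometryOfInner
    (LinearEquiv.ofLinear (Matrix.toEuclideanLin V) (Matrix.toEuclideanLin (star V))
      (by rw [← toEuclideanLin_mul', Matrix.mem_unitaryGroup_iff.mp hV, toEuclideanLin_one'])
      (by rw [← toEuclideanLin_mul', Matrix.mem_unitaryGroup_iff'.mp hV, toEuclideanLin_one']))
    (by
      intro x y
      have h1 : (Matrix.toEuclideanLin (star V)) ((Matrix.toEuclideanLin V) y) = y := by
        rw [← LinearMap.comp_apply, ← toEuclideanLin_mul', Matrix.mem_unitaryGroup_iff'.mp hV,
          toEuclideanLin_one', LinearMap.id_apply]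
      calc ⟪(Matrix.toEuclideanLin V) x, (Matrix.toEuclideanLin V) y⟫_ℂ
          = ⟪x, LinearMap.adjoint (Matrix.toEuclideanLin V) ((Matrix.toEuclideanLin V) y)⟫_ℂ := by
            rw [LinearMap.adjoint_inner_right]
        _ = ⟪x, y⟫_ℂ := by
            rw [← Matrix.toEuclideanLin_conjTranspose_eq_adjoint, ← Matrix.star_eq_conjTranspose, h1])

lemma uIso_apply (V : Matrix (Fin k) (Fin k) ℂ) (hV : V ∈ Matrix.unitaryGroup (Fin k) ℂ)
    (x : EuclideanSpace ℂ (Fin k)) : uIso V hV x = Matrix.toEuclideanLin V x := rfl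

lemma norm_toEuclideanLin_unitary (V : Matrix (Fin k) (Fin k) ℂ)
    (hV : V ∈ Matrix.unitaryGroup (Fin k) ℂ) (x : EuclideanSpace ℂ (Fin k)) :
    ‖Matrix.toEuclideanLin V x‖ = ‖x‖ := (uIso V hV).norm_map x

lemma specNorm_unitary (U : Matrix (Fin m) (Fin m) ℂ) (hU : U ∈ Matrix.unitaryGroup (Fin m) ℂ)
    (V : Matrix (Fin n) (Fin n) ℂ) (hV : V ∈ Matrix.unitaryGroup (Fin n) ℂ)
    (M : Matrix (Fin m) (Fin n) ℂ) :
    specNorm (U * M * V) = specNorm M := by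
  have key : LinearMap.toContinuousLinearMap (Matrix.toEuclideanLin (U * M * V)) =
      ((uIso U hU).toLinearIsometry.toContinuousLinearMap.comp
        (LinearMap.toContinuousLinearMap (Matrix.toEuclideanLin M))).comp
        (uIso V hV).toLinearIsometry.toContinuousLinearMap := by
    ext x
    simp only [ContinuousLinearMap.comp_apply, LinearMap.coe_toContinuousLinearMap,
      LinearIsometry.coe_toContinuousLinearMap, LinearIsometryEquiv.coe_toLinearIsometry]
    rw [toEuclideanLin_mul', toEuclideanLin_mul']
    rfl
  unfold specNorm
  rw [key]
  exact (ContinuousLinearMap.opNorm_comp_linearIsometryEquiv _ (uIso V hV)).trans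
    (LinearIsometry.norm_toContinuousLinearMap_comp _)

lemma dmat_apply (d : Fin (min m n) → ℝ) (i : Fin m) (j : Fin n) :
    dmat d i j = if h : (i : ℕ) = (j : ℕ) ∧ (i : ℕ) < min m n
      then (d ⟨(i : ℕ), h.2⟩ : ℂ) else 0 := rfl

lemma dmat_mulVec_apply (d : Fin (min m n) → ℝ) (y : Fin n → ℂ) (i : Fin m) :
    (dmat d *ᵥ y) i = if h : (i : ℕ) < min m n
      then (d ⟨(i : ℕ), h⟩ : ℂ) * y ⟨(i : ℕ), lt_of_lt_of_le h (min_le_right m n)⟩ else 0 := by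
  rw [Matrix.mulVec, dotProduct]
  by_cases h : (i : ℕ) < min m n
  · rw [dif_pos h]
    have hn : (i : ℕ) < n := lt_of_lt_of_le h (min_le_right m n)
    calc (∑ j, dmat d i j * y j) = dmat d i ⟨(i : ℕ), hn⟩ * y ⟨(i : ℕ), hn⟩ := by
          apply Finset.sum_eq_single_of_mem _ (Finset.mem_univ _)
          intro j _ hj
          have hne : ¬((i : ℕ) = (j : ℕ) ∧ (i : ℕ) < min m n) := by
            rintro ⟨hij, -⟩
            exact hj (by ext; exact hij.symm)
          rw [dmat_apply, dif_neg hne, zero_mul]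
      _ = (d ⟨(i : ℕ), h⟩ : ℂ) * y ⟨(i : ℕ), hn⟩ := by
          rw [dmat_apply, dif_pos ⟨rfl, h⟩]
  · rw [dif_neg h]
    apply Finset.sum_eq_zero
    intro j _
    have hne : ¬((i : ℕ) = (j : ℕ) ∧ (i : ℕ) < min m n) := fun hh => h hh.2
    rw [dmat_apply, dif_neg hne, zero_mul]

lemma sum_norm_sq_dmat (d : Fin (min m n) → ℝ) (y : Fin n → ℂ) :
    ∑ i : Fin m, ‖(dmat d *ᵥ y) i‖ ^ 2
      = ∑ kk : Fin (min m n), (d kk) ^ 2 *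
          ‖y ⟨(kk : ℕ), lt_of_lt_of_le kk.2 (min_le_right m n)⟩‖ ^ 2 := by
  have h0 : ∀ i ∈ (Finset.univ : Finset (Fin m)),
      i ∉ Finset.univ.filter (fun i : Fin m => (i : ℕ) < min m n) →
      ‖(dmat d *ᵥ y) i‖ ^ 2 = 0 := by
    intro i _ hi
    simp only [Finset.mem_filter, Finset.mem_univ, true_and] at hi
    rw [dmat_mulVec_apply, dif_neg hi, norm_zero]
    norm_num
  rw [← Finset.sum_subset (Finset.filter_subset _ _) h0]
  have himg : Finset.univ.filter (fun i : Fin m => (i : ℕ) < min m n)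
      = Finset.image (fun kk : Fin (min m n) =>
          (⟨(kk : ℕ), lt_of_lt_of_le kk.2 (min_le_left m n)⟩ : Fin m)) Finset.univ := by
    ext i
    simp only [Finset.mem_filter, Finset.mem_univ, true_and, Finset.mem_image]
    constructor
    · intro h; exact ⟨⟨(i : ℕ), h⟩, rfl⟩
    · rintro ⟨kk, rfl⟩; exact kk.2
  have hinj : ∀ a ∈ (Finset.univ : Finset (Fin (min m n))),
      ∀ b ∈ (Finset.univ : Finset (Fin (min m n))),
      (⟨(a : ℕ), lt_of_lt_of_le a.2 (min_le_left m n)⟩ : Fin m)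
        = ⟨(b : ℕ), lt_of_lt_of_le b.2 (min_le_left m n)⟩ → a = b := by
    intro a _ b _ hab
    simpa [Fin.ext_iff] using hab
  rw [himg, Finset.sum_image hinj]
  apply Finset.sum_congr rfl
  intro kk _
  rw [dmat_mulVec_apply]
  rw [dif_pos (show ((⟨(kk : ℕ), lt_of_lt_of_le kk.2 (min_le_left m n)⟩ : Fin m) : ℕ) < min m n from kk.2)]
  rw [norm_mul, mul_pow, Complex.norm_real, Real.norm_eq_abs, sq_abs]

lemma norm_sq_eu {k : ℕ} (x : EuclideanSpace ℂ (Fin k)) : ‖x‖ ^ 2 = ∑ i, ‖x i‖ ^ 2 := by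
  rw [EuclideanSpace.norm_eq, Real.sq_sqrt]
  positivity

lemma specNorm_dmat_le (d : Fin (min m n) → ℝ) (c : ℝ) (hc : 0 ≤ c)
    (hd : ∀ i, |d i| ≤ c) : specNorm (dmat d) ≤ c := by
  apply ContinuousLinearMap.opNorm_le_bound _ hc
  intro y
  have hy : ∀ i, (LinearMap.toContinuousLinearMap (Matrix.toEuclideanLin (dmat d)) y) i
      = (dmat d *ᵥ y) i := fun i => rfl
  apply le_of_pow_le_pow_left₀ two_ne_zero (by positivity)
  rw [mul_pow, norm_sq_eu, norm_sq_eu]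
  calc (∑ i, ‖(LinearMap.toContinuousLinearMap (Matrix.toEuclideanLin (dmat d)) y) i‖ ^ 2)
      = ∑ i : Fin m, ‖(dmat d *ᵥ y) i‖ ^ 2 := by
        apply Finset.sum_congr rfl; intro i _; rw [hy]
    _ = ∑ kk : Fin (min m n), (d kk) ^ 2 *
          ‖y ⟨(kk : ℕ), lt_of_lt_of_le kk.2 (min_le_right m n)⟩‖ ^ 2 := sum_norm_sq_dmat d y
    _ ≤ ∑ kk : Fin (min m n), c ^ 2 *
          ‖y ⟨(kk : ℕ), lt_of_lt_of_le kk.2 (min_le_right m n)⟩‖ ^ 2 := by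
        apply Finset.sum_le_sum
        intro kk _
        apply mul_le_mul_of_nonneg_right _ (by positivity)
        calc (d kk) ^ 2 = |d kk| ^ 2 := (sq_abs _).symm
          _ ≤ c ^ 2 := by
              apply pow_le_pow_left₀ (abs_nonneg _) (hd kk)
    _ ≤ c ^ 2 * ∑ j : Fin n, ‖y j‖ ^ 2 := by
        rw [← Finset.mul_sum]
        apply mul_le_mul_of_nonneg_left _ (by positivity)
        have hinj : ∀ a ∈ (Finset.univ : Finset (Fin (min m n))),
            ∀ b ∈ (Finset.univ : Finset (Fin (min m n))),
            (⟨(a : ℕ), lt_of_lt_of_le a.2 (min_le_right m n)⟩ : Fin n)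
              = ⟨(b : ℕ), lt_of_lt_of_le b.2 (min_le_right m n)⟩ → a = b := by
          intro a _ b _ hab; simpa [Fin.ext_iff] using hab
        rw [← Finset.sum_image (s := (Finset.univ : Finset (Fin (min m n))))
          (g := fun kk : Fin (min m n) =>
            (⟨(kk : ℕ), lt_of_lt_of_le kk.2 (min_le_right m n)⟩ : Fin n))
          (f := fun j : Fin n => ‖y j‖ ^ 2) hinj]
        apply Finset.sum_le_sum_of_subset_of_nonneg (Finset.subset_univ _)
        intro j _ _
        positivity

lemma sum_support_eq {r : ℕ} (hr : r < min m n) (y : Fin n → ℂ)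
    (hy : ∀ j : Fin n, r < (j : ℕ) → y j = 0) :
    ∑ j : Fin n, ‖y j‖ ^ 2
      = ∑ kk : Fin (min m n), ‖y ⟨(kk : ℕ), lt_of_lt_of_le kk.2 (min_le_right m n)⟩‖ ^ 2 := by
  have hinj : ∀ a ∈ (Finset.univ : Finset (Fin (min m n))),
      ∀ b ∈ (Finset.univ : Finset (Fin (min m n))),
      (⟨(a : ℕ), lt_of_lt_of_le a.2 (min_le_right m n)⟩ : Fin n)
        = ⟨(b : ℕ), lt_of_lt_of_le b.2 (min_le_right m n)⟩ → a = b := by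
    intro a _ b _ hab; simpa [Fin.ext_iff] using hab
  rw [← Finset.sum_image (s := (Finset.univ : Finset (Fin (min m n))))
    (g := fun kk : Fin (min m n) =>
      (⟨(kk : ℕ), lt_of_lt_of_le kk.2 (min_le_right m n)⟩ : Fin n))
    (f := fun j : Fin n => ‖y j‖ ^ 2) hinj]
  apply (Finset.sum_subset (Finset.subset_univ _) ?_).symm
  intro j _ hj
  have hlt : ¬ (j : ℕ) < min m n := by
    intro hlt
    exact hj (Finset.mem_image.mpr ⟨⟨(j : ℕ), hlt⟩, Finset.mem_univ _, rfl⟩)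
  rw [hy j (by omega), norm_zero]
  norm_num

lemma dmat_lower {r : ℕ} (hr : r < min m n) (d : Fin (min m n) → ℝ) (hd : ∀ i, 0 ≤ d i)
    (hmono : Antitone d) (y : EuclideanSpace ℂ (Fin n))
    (hy : ∀ j : Fin n, r < (j : ℕ) → y j = 0) :
    d ⟨r, hr⟩ * ‖y‖ ≤ ‖Matrix.toEuclideanLin (dmat d) y‖ := by
  apply le_of_pow_le_pow_left₀ two_ne_zero (norm_nonneg _)
  rw [mul_pow, norm_sq_eu, norm_sq_eu]
  have hco : ∀ i : Fin m, (Matrix.toEuclideanLin (dmat d) y) i = (dmat d *ᵥ y) i := fun _ => rfl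
  calc d ⟨r, hr⟩ ^ 2 * ∑ j : Fin n, ‖y j‖ ^ 2
      = ∑ kk : Fin (min m n), d ⟨r, hr⟩ ^ 2 *
          ‖y ⟨(kk : ℕ), lt_of_lt_of_le kk.2 (min_le_right m n)⟩‖ ^ 2 := by
        rw [sum_support_eq hr y hy, Finset.mul_sum]
    _ ≤ ∑ kk : Fin (min m n), (d kk) ^ 2 *
          ‖y ⟨(kk : ℕ), lt_of_lt_of_le kk.2 (min_le_right m n)⟩‖ ^ 2 := by
        apply Finset.sum_le_sum
        intro kk _
        by_cases hkk : (kk : ℕ) ≤ r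
        · apply mul_le_mul_of_nonneg_right _ (by positivity)
          have : d ⟨r, hr⟩ ≤ d kk := hmono (by exact hkk)
          exact pow_le_pow_left₀ (hd _) this 2
        · rw [hy _ (show r < (kk : ℕ) by omega), norm_zero]
          norm_num
    _ = ∑ i : Fin m, ‖(dmat d *ᵥ y) i‖ ^ 2 := (sum_norm_sq_dmat d y).symm
    _ = ∑ i : Fin m, ‖(Matrix.toEuclideanLin (dmat d) y) i‖ ^ 2 := by
        apply Finset.sum_congr rfl
        intro i _
        rw [hco]

lemma rank_dmat_le {r : ℕ} (d : Fin (min m n) → ℝ)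
    (hd : ∀ i : Fin (min m n), r ≤ (i : ℕ) → d i = 0) : (dmat d).rank ≤ r := by
  classical
  set T : Finset (Fin m) := Finset.univ.filter (fun i => (i : ℕ) < r) with hT
  have hvan : ∀ (y : Fin n → ℂ) (i : Fin m), i ∉ T → (dmat d).mulVecLin y i = 0 := by
    intro y i hi
    have hir : ¬ (i : ℕ) < r := by
      intro h; exact hi (by simp [hT, h])
    show (dmat d *ᵥ y) i = 0
    rw [dmat_mulVec_apply]
    by_cases h : (i : ℕ) < min m n
    · rw [dif_pos h, hd ⟨(i : ℕ), h⟩ (show r ≤ (i : ℕ) by omega), Complex.ofReal_zero, zero_mul]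
    · rw [dif_neg h]
  have hrange : LinearMap.range (dmat d).mulVecLin ≤
      Submodule.span ℂ ((T.image fun i => (Pi.single i (1 : ℂ) : Fin m → ℂ)) : Set (Fin m → ℂ)) := by
    rintro v ⟨y, rfl⟩
    have base : (dmat d).mulVecLin y
        = ∑ i : Fin m, ((dmat d).mulVecLin y i) • (Pi.single i (1 : ℂ) : Fin m → ℂ) := by
      ext j
      simp [Pi.single_apply]
    have base2 : (dmat d).mulVecLin y
        = ∑ i ∈ T, ((dmat d).mulVecLin y i) • (Pi.single i (1 : ℂ) : Fin m → ℂ) := by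
      conv_lhs => rw [base]
      apply (Finset.sum_subset (Finset.subset_univ T) ?_).symm
      intro i _ hi
      rw [hvan y i hi, zero_smul]
    rw [base2]
    apply Submodule.sum_mem
    intro i hi
    apply Submodule.smul_mem
    apply Submodule.subset_span
    exact Finset.mem_coe.mpr (Finset.mem_image.mpr ⟨i, hi, rfl⟩)
  have h1 : (dmat d).rank ≤ (T.image fun i => (Pi.single i (1 : ℂ) : Fin m → ℂ)).card :=
    le_trans (Submodule.finrank_mono hrange) (finrank_span_finset_le_card _)
  have h2 : T.card ≤ r := by
    have hc : T.card = (T.image Fin.val).card :=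
      (Finset.card_image_of_injective T Fin.val_injective).symm
    have hsub : T.image Fin.val ⊆ Finset.range r := by
      intro x hx
      obtain ⟨i, hi, rfl⟩ := Finset.mem_image.mp hx
      simp only [hT, Finset.mem_filter, Finset.mem_univ, true_and] at hi
      exact Finset.mem_range.mpr hi
    calc T.card = (T.image Fin.val).card := hc
      _ ≤ (Finset.range r).card := Finset.card_le_card hsub
      _ = r := Finset.card_range r
  exact le_trans (le_trans h1 (Finset.card_image_le)) h2

def coordSub (r k : ℕ) : Submodule ℂ (EuclideanSpace ℂ (Fin k)) where
  carrier := {y | ∀ j : Fin k, r < (j : ℕ) → y j = 0}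
  add_mem' := by
    intro a b ha hb j hj
    show a j + b j = 0
    rw [ha j hj, hb j hj, add_zero]
  zero_mem' := by intro j hj; rfl
  smul_mem' := by
    intro c a ha j hj
    show c * a j = 0
    rw [ha j hj, mul_zero]

lemma mem_coordSub {r k : ℕ} {y : EuclideanSpace ℂ (Fin k)} :
    y ∈ coordSub r k ↔ ∀ j : Fin k, r < (j : ℕ) → y j = 0 := Iff.rfl

lemma le_finrank_coordSub {r k : ℕ} (hrk : r < k) :
    r + 1 ≤ Module.finrank ℂ (coordSub r k) := by
  classical
  have hmem : ∀ i : Fin (r + 1),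
      (EuclideanSpace.single (⟨(i : ℕ), by omega⟩ : Fin k) (1 : ℂ)) ∈ coordSub r k := by
    intro i
    rw [mem_coordSub]
    intro j hj
    rw [EuclideanSpace.single_apply]
    have : j ≠ (⟨(i : ℕ), by omega⟩ : Fin k) := by
      intro h
      have := congrArg Fin.val h
      simp at this
      omega
    rw [if_neg this]
  set f : Fin (r + 1) → coordSub r k := fun i =>
    ⟨EuclideanSpace.single (⟨(i : ℕ), by omega⟩ : Fin k) (1 : ℂ), hmem i⟩ with hf
  have hg : LinearIndependent ℂ (fun i : Fin (r + 1) =>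
      (EuclideanSpace.single (⟨(i : ℕ), by omega⟩ : Fin k) (1 : ℂ))) := by
    have hb := (EuclideanSpace.basisFun (Fin k) ℂ).toBasis.linearIndependent
    have := hb.comp (fun i : Fin (r + 1) => (⟨(i : ℕ), by omega⟩ : Fin k))
      (fun a b hab => by simpa [Fin.ext_iff] using hab)
    convert this using 1
    funext i
    show _ = (EuclideanSpace.basisFun (Fin k) ℂ) _
    rw [EuclideanSpace.basisFun_apply]
    all_goals rfl
  have hli : LinearIndependent ℂ f := by
    apply LinearIndependent.of_comp (coordSub r k).subtype
    convert hg using 1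
    rfl
  calc r + 1 = Fintype.card (Fin (r + 1)) := (Fintype.card_fin _).symm
    _ ≤ Module.finrank ℂ (coordSub r k) := hli.fintype_card_le_finrank

lemma sv_le_specNorm_sub {m n r : ℕ} (A : Matrix (Fin m) (Fin n) ℂ)
    (σ : Fin (min m n) → ℝ) (hσ : IsSingularValues A σ) (hr : r < min m n)
    (B : Matrix (Fin m) (Fin n) ℂ) (hB : B.rank ≤ r) :
    σ ⟨r, hr⟩ ≤ specNorm (A - B) := by
  classical
  obtain ⟨hmono, hpos, U, hU, V, hV, hA⟩ := hσ
  have hA' : A = U * dmat σ * V := hA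
  set g := Matrix.toEuclideanLin B with hg
  have hrank : B.rank = Module.finrank ℂ (LinearMap.range g) := by
    rw [hg, Matrix.toEuclideanLin_eq_toLin]
    exact Matrix.rank_eq_finrank_range_toLin B _ _
  have hker : n ≤ Module.finrank ℂ (LinearMap.ker g) + r := by
    have h1 := LinearMap.finrank_range_add_finrank_ker g
    rw [finrank_euclideanSpace_fin] at h1
    have h2 : Module.finrank ℂ (LinearMap.range g) ≤ r := hrank ▸ hB
    omega
  set W : Submodule ℂ (EuclideanSpace ℂ (Fin n)) :=
    Submodule.map ((uIso V hV).symm.toLinearEquiv :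
      EuclideanSpace ℂ (Fin n) →ₗ[ℂ] EuclideanSpace ℂ (Fin n)) (coordSub r n) with hWdef
  have hrn : r < n := lt_of_lt_of_le hr (min_le_right m n)
  have hWrank : r + 1 ≤ Module.finrank ℂ W := by
    rw [hWdef, LinearEquiv.finrank_map_eq]
    exact le_finrank_coordSub hrn
  have hsum := Submodule.finrank_sup_add_finrank_inf_eq W (LinearMap.ker g)
  have hsup : Module.finrank ℂ ↥(W ⊔ LinearMap.ker g) ≤ n :=
    le_trans (Submodule.finrank_le _) (le_of_eq (finrank_euclideanSpace_fin))
  have hposrk : 0 < Module.finrank ℂ ↥(W ⊓ LinearMap.ker g) := by omega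
  have hbot : W ⊓ LinearMap.ker g ≠ ⊥ := by
    intro h
    rw [h, finrank_bot] at hposrk
    exact lt_irrefl 0 hposrk
  obtain ⟨x, hx, hx0⟩ := Submodule.exists_mem_ne_zero_of_ne_bot hbot
  obtain ⟨hxW, hxK⟩ := Submodule.mem_inf.mp hx
  have hxK' : g x = 0 := LinearMap.mem_ker.mp hxK
  have hy : Matrix.toEuclideanLin V x ∈ coordSub r n := by
    obtain ⟨y₀, hy₀, rfl⟩ := hxW
    show (uIso V hV) ((uIso V hV).symm y₀) ∈ coordSub r n
    rw [(uIso V hV).apply_symm_apply y₀]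
    exact hy₀
  have hnx : 0 < ‖x‖ := norm_pos_iff.mpr hx0
  have hyx : ‖Matrix.toEuclideanLin V x‖ = ‖x‖ := norm_toEuclideanLin_unitary V hV x
  have hAx : Matrix.toEuclideanLin A x
      = Matrix.toEuclideanLin U (Matrix.toEuclideanLin (dmat σ) (Matrix.toEuclideanLin V x)) := by
    rw [hA', toEuclideanLin_mul', toEuclideanLin_mul']
    rfl
  have h5 : ‖Matrix.toEuclideanLin A x‖
      = ‖Matrix.toEuclideanLin (dmat σ) (Matrix.toEuclideanLin V x)‖ := by
    rw [hAx, norm_toEuclideanLin_unitary U hU]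
  have hlow : σ ⟨r, hr⟩ * ‖x‖ ≤ ‖Matrix.toEuclideanLin A x‖ := by
    rw [h5, ← hyx]
    exact dmat_lower hr σ hpos hmono _ (fun j hj => hy j hj)
  have hsub : Matrix.toEuclideanLin (A - B) x = Matrix.toEuclideanLin A x := by
    rw [map_sub]
    rw [LinearMap.sub_apply, ← hg, hxK', sub_zero]
  have hup : ‖Matrix.toEuclideanLin (A - B) x‖ ≤ specNorm (A - B) * ‖x‖ :=
    (LinearMap.toContinuousLinearMap (Matrix.toEuclideanLin (A - B))).le_opNorm x
  rw [hsub] at hup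
  exact le_of_mul_le_mul_right (le_trans hlow hup) hnx

lemma exists_truncation {m n r : ℕ} (A : Matrix (Fin m) (Fin n) ℂ)
    (σ : Fin (min m n) → ℝ) (hσ : IsSingularValues A σ) (hr : r < min m n) :
    ∃ B : Matrix (Fin m) (Fin n) ℂ, B.rank ≤ r ∧ specNorm (A - B) = σ ⟨r, hr⟩ := by
  classical
  obtain ⟨hmono, hpos, U, hU, V, hV, hA⟩ := hσ
  have hA' : A = U * dmat σ * V := hA
  set d' : Fin (min m n) → ℝ := fun i => if (i : ℕ) < r then σ i else 0 with hd'
  set d'' : Fin (min m n) → ℝ := fun i => if (i : ℕ) < r then 0 else σ i with hd''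
  have hrank : (U * dmat d' * V).rank ≤ r := by
    calc (U * dmat d' * V).rank ≤ (U * dmat d').rank := Matrix.rank_mul_le_left _ _
      _ ≤ (dmat d').rank := Matrix.rank_mul_le_right _ _
      _ ≤ r := rank_dmat_le d' (fun i hi => by simp [hd', Nat.not_lt.mpr hi])
  refine ⟨U * dmat d' * V, hrank, ?_⟩
  have hsplit : dmat σ = dmat d' + dmat d'' := by
    ext i j
    simp only [dmat, Matrix.add_apply, Matrix.of_apply]
    by_cases h : (i : ℕ) = (j : ℕ) ∧ (i : ℕ) < min m n
    · rw [dif_pos h, dif_pos h, dif_pos h, hd', hd'']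
      by_cases h2 : (i : ℕ) < r <;> simp [h2]
    · rw [dif_neg h, dif_neg h, dif_neg h, add_zero]
  have hAB : A - U * dmat d' * V = U * dmat d'' * V := by
    rw [hA', hsplit, Matrix.mul_add, Matrix.add_mul, add_sub_cancel_left]
  rw [hAB, specNorm_unitary U hU V hV]
  apply le_antisymm
  · apply specNorm_dmat_le d'' _ (hpos _)
    intro i
    rw [hd'']
    by_cases h2 : (i : ℕ) < r
    · simp only [if_pos h2, abs_zero]
      exact hpos _
    · simp only [if_neg h2]
      rw [abs_of_nonneg (hpos i)]
      exact hmono (show ((⟨r, hr⟩ : Fin (min m n)) ≤ i) from Nat.not_lt.mp h2)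
  · have hlow := sv_le_specNorm_sub A σ ⟨hmono, hpos, U, hU, V, hV, hA⟩ hr
      (U * dmat d' * V) hrank
    rw [hAB, specNorm_unitary U hU V hV] at hlow
    exact hlow

end Infra

/-- `σ_{r+1}(A)` is the spectral-norm distance from `A` to the set of matrices of
rank at most `r`. -/
theorem singularValue_eq_dist_lowRank {m n r : ℕ} (A : Matrix (Fin m) (Fin n) ℂ)
    (σ : Fin (min m n) → ℝ) (hσ : IsSingularValues A σ) (hr : r < min m n) :
    σ ⟨r, hr⟩ =
      sInf {x : ℝ | ∃ B : Matrix (Fin m) (Fin n) ℂ, B.rank ≤ r ∧ x = specNorm (A - B)} := by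
  obtain ⟨B₀, hB₀r, hB₀⟩ := exists_truncation A σ hσ hr
  apply le_antisymm
  · refine le_csInf ⟨specNorm (A - 0), 0, by simp, rfl⟩ ?_
    rintro b ⟨B, hB, rfl⟩
    exact sv_le_specNorm_sub A σ hσ hr B hB
  · exact csInf_le ⟨0, by rintro b ⟨B, hB, rfl⟩; exact norm_nonneg _⟩ ⟨B₀, hB₀r, hB₀.symm⟩
end
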